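/- If G is a connected multigraph of odd order that contains a bridge, then G is odd 3-edge-colorable. -/

import Mathlib

open Finset

namespace OddColor

attribute [local instance] Classical.propDecidable

variable {V E : Type*}

noncomputable def deg (f : E → Sym2 V) (Edges : Finset E) (w : V) : ℕ :=
  (Edges.filter (fun e => w ∈ f e)).card

noncomputable def ccard (f : E → Sym2 V) (Edges : Finset E) (c : E → Fin 3) (w : V) (γ : Fin 3) : ℕ :=
  (Edges.filter (fun e => w ∈ f e ∧ c e = γ)).card

def OK (k : ℕ) : Prop := k ≠ 0 → Odd k

lemma OK_zero : OK 0 := fun h => absurd rfl h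
lemma OK_of_odd {k : ℕ} (h : Odd k) : OK k := fun _ => h

def flip (a : Fin 3) : Fin 3 := if a = 1 then 2 else 1

/-! ### ancestors -/

noncomputable def anc (p : ℕ → ℕ) (i : ℕ) : Finset ℕ :=
  if h : 0 < i ∧ p i < i then insert i (anc p (p i)) else {i}
termination_by i
decreasing_by exact h.2

section Anc
variable {p : ℕ → ℕ}

lemma self_mem_anc (i : ℕ) : i ∈ anc p i := by
  rw [anc]; split <;> simp

lemma mem_anc_le {k i : ℕ} : k ∈ anc p i → k ≤ i := by
  induction i using Nat.strong_induction_on with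
  | _ i IH =>
    rw [anc]
    split
    · next h =>
      intro hk
      rcases Finset.mem_insert.mp hk with rfl | hk
      · exact le_rfl
      · exact (IH _ h.2 hk).trans h.2.le
    · intro hk; simp at hk; omega

lemma mem_anc_step {k i : ℕ} (hk : k ∈ anc p i) (hne : k ≠ i) :
    (0 < i ∧ p i < i) ∧ k ∈ anc p (p i) := by
  rw [anc] at hk
  split at hk
  · next h =>
      refine ⟨h, ?_⟩
      rcases Finset.mem_insert.mp hk with rfl | hk2
      · exact absurd rfl hne
      · exact hk2
  · simp at hk; exact absurd hk hne

lemma anc_eq_insert {k : ℕ} (hg : 0 < k ∧ p k < k) : anc p k = insert k (anc p (p k)) := by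
  rw [anc, dif_pos hg]

lemma anc_subset_of_mem {j k : ℕ} (hj : j ∈ anc p k) : anc p j ⊆ anc p k := by
  induction k using Nat.strong_induction_on with
  | _ k IH =>
    by_cases hje : j = k
    · subst hje; exact subset_rfl
    · obtain ⟨hg, hj'⟩ := mem_anc_step hj hje
      have h2 : anc p j ⊆ anc p (p k) := IH _ hg.2 hj'
      rw [anc_eq_insert hg]
      exact h2.trans (Finset.subset_insert _ _)

lemma anc_chain {j₁ j₂ k : ℕ} (h1 : j₁ ∈ anc p k) (h2 : j₂ ∈ anc p k) :
    j₁ ∈ anc p j₂ ∨ j₂ ∈ anc p j₁ := by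
  induction k using Nat.strong_induction_on with
  | _ k IH =>
    by_cases e1 : j₁ = k
    · subst e1; exact Or.inr h2
    by_cases e2 : j₂ = k
    · subst e2; exact Or.inl h1
    obtain ⟨hg, h1'⟩ := mem_anc_step h1 e1
    obtain ⟨_, h2'⟩ := mem_anc_step h2 e2
    exact IH _ hg.2 h1' h2'

lemma find_child {i : ℕ} : ∀ k, i ∈ anc p k → k ≠ i →
    ∃ j, j ≤ k ∧ 0 < j ∧ p j = i ∧ j ∈ anc p k := by
  intro k
  induction k using Nat.strong_induction_on with
  | _ k IH =>
    intro hik hek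
    obtain ⟨hg, hik'⟩ := mem_anc_step hik (Ne.symm hek)
    by_cases hpk : p k = i
    · exact ⟨k, le_rfl, hg.1, hpk, self_mem_anc k⟩
    · obtain ⟨j, hj0, hj1, hj2, hj3⟩ := IH (p k) hg.2 hik' hpk
      exact ⟨j, (hj0.trans hg.2.le), hj1, hj2, (anc_eq_insert hg) ▸ Finset.mem_insert_of_mem hj3⟩

end Anc

/-! ### the spanning enumeration -/

structure Enum (f : E → Sym2 V) (Edges : Finset E) (n : ℕ) (v : ℕ → V) (p : ℕ → ℕ) (pe : ℕ → E) : Prop where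
  npos : 0 < n
  inj : ∀ i < n, ∀ j < n, v i = v j → i = j
  plt : ∀ i, 0 < i → i < n → p i < i
  pmem : ∀ i, 0 < i → i < n → pe i ∈ Edges
  pf : ∀ i, 0 < i → i < n → f (pe i) = s(v (p i), v i)
  cover : ∀ e ∈ Edges, ∀ u ∈ f e, ∃ i, i < n ∧ v i = u

/-! ### descendants -/

noncomputable def Ds (n : ℕ) (p : ℕ → ℕ) (i : ℕ) : Finset ℕ :=
  (range n).filter (fun j => i ∈ anc p j)

noncomputable def child (n : ℕ) (p : ℕ → ℕ) (i : ℕ) : Finset ℕ :=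
  (range n).filter (fun j => 0 < j ∧ p j = i)

section DsSec
variable {f : E → Sym2 V} {Edges : Finset E} {n : ℕ} {v : ℕ → V} {p : ℕ → ℕ} {pe : ℕ → E}

lemma mem_Ds {i j : ℕ} : j ∈ Ds n p i ↔ j < n ∧ i ∈ anc p j := by simp [Ds]

lemma mem_child {i j : ℕ} : j ∈ child n p i ↔ j < n ∧ 0 < j ∧ p j = i := by
  simp [child]

lemma Enum.zero_mem_anc (hE : Enum f Edges n v p pe) : ∀ i < n, 0 ∈ anc p i := by
  intro i
  induction i using Nat.strong_induction_on with
  | _ i IH =>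
    intro hi
    rcases Nat.eq_zero_or_pos i with rfl | hpos
    · exact self_mem_anc 0
    · have hg : 0 < i ∧ p i < i := ⟨hpos, hE.plt i hpos hi⟩
      rw [anc_eq_insert hg]
      exact Finset.mem_insert_of_mem (IH _ hg.2 (hg.2.trans hi))

lemma Ds_zero (hE : Enum f Edges n v p pe) : Ds n p 0 = range n := by
  ext j
  simp only [mem_Ds, Finset.mem_range]
  exact ⟨fun h => h.1, fun h => ⟨h, hE.zero_mem_anc _ h⟩⟩

lemma Ds_decomp (hplt : ∀ i, 0 < i → i < n → p i < i) {i : ℕ} (hi : i < n) :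
    Ds n p i = insert i ((child n p i).biUnion (fun j => Ds n p j)) := by
  ext k
  simp only [Finset.mem_insert, Finset.mem_biUnion, mem_Ds, mem_child]
  constructor
  · rintro ⟨hk, hik⟩
    by_cases hek : k = i
    · exact Or.inl hek
    · obtain ⟨j, hjk, hj0, hpj, hjanc⟩ := find_child k hik hek
      exact Or.inr ⟨j, ⟨lt_of_le_of_lt hjk hk, hj0, hpj⟩, hk, hjanc⟩
  · rintro (rfl | ⟨j, ⟨hjn, hj0, hpj⟩, hk, hjk⟩)
    · exact ⟨hi, self_mem_anc _⟩
    · refine ⟨hk, ?_⟩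
      have hg : 0 < j ∧ p j < j := ⟨hj0, hplt j hj0 hjn⟩
      have h1 : i ∈ anc p j := by
        rw [anc_eq_insert hg, ← hpj]
        exact Finset.mem_insert_of_mem (self_mem_anc _)
      exact anc_subset_of_mem hjk h1

lemma Ds_child_disjoint (hplt : ∀ i, 0 < i → i < n → p i < i) {i j₁ j₂ : ℕ}
    (h1 : j₁ ∈ child n p i) (h2 : j₂ ∈ child n p i) (hne : j₁ ≠ j₂) :
    Disjoint (Ds n p j₁) (Ds n p j₂) := by
  rw [Finset.disjoint_left]
  intro k hk1 hk2
  rw [mem_Ds] at hk1 hk2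
  rw [mem_child] at h1 h2
  have hg1 : 0 < j₁ ∧ p j₁ < j₁ := ⟨h1.2.1, hplt _ h1.2.1 h1.1⟩
  have hg2 : 0 < j₂ ∧ p j₂ < j₂ := ⟨h2.2.1, hplt _ h2.2.1 h2.1⟩
  rcases anc_chain hk1.2 hk2.2 with hc | hc
  · have := mem_anc_le ((mem_anc_step hc hne).2)
    omega
  · have := mem_anc_le ((mem_anc_step hc (Ne.symm hne)).2)
    omega

lemma not_mem_child_biUnion (hplt : ∀ i, 0 < i → i < n → p i < i) {i : ℕ} :
    i ∉ (child n p i).biUnion (fun j => Ds n p j) := by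
  intro h
  obtain ⟨j, hj, hij⟩ := Finset.mem_biUnion.mp h
  rw [mem_child] at hj
  rw [mem_Ds] at hij
  have h1 := mem_anc_le hij.2
  have := hplt j hj.2.1 hj.1
  omega

/-- the key counting identity for subtrees -/
lemma card_inter_Ds (hplt : ∀ i, 0 < i → i < n → p i < i) (A : Finset ℕ) {i : ℕ} (hi : i < n) :
    (A ∩ Ds n p i).card
      = (if i ∈ A then 1 else 0) + ∑ j ∈ child n p i, (A ∩ Ds n p j).card := by
  rw [Ds_decomp hplt hi]
  have hnot := not_mem_child_biUnion (p := p) hplt (i := i)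
  have hdisj : ∀ j₁ ∈ child n p i, ∀ j₂ ∈ child n p i, j₁ ≠ j₂ →
      Disjoint (A ∩ Ds n p j₁) (A ∩ Ds n p j₂) := by
    intro j₁ h1 j₂ h2 hne
    exact Finset.disjoint_of_subset_left Finset.inter_subset_right
      (Finset.disjoint_of_subset_right Finset.inter_subset_right
        (Ds_child_disjoint hplt h1 h2 hne))
  have hAB : A ∩ (child n p i).biUnion (fun j => Ds n p j)
      = (child n p i).biUnion (fun j => A ∩ Ds n p j) := by
    ext k; simp only [Finset.mem_inter, Finset.mem_biUnion]; tauto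
  by_cases hiA : i ∈ A
  · rw [if_pos hiA]
    have : A ∩ insert i ((child n p i).biUnion (fun j => Ds n p j))
        = insert i ((child n p i).biUnion (fun j => A ∩ Ds n p j)) := by
      rw [Finset.inter_insert_of_mem hiA, hAB]
    rw [this, Finset.card_insert_of_notMem, Finset.card_biUnion hdisj]
    · omega
    · intro hmem
      obtain ⟨j, hj, hij⟩ := Finset.mem_biUnion.mp hmem
      exact hnot (Finset.mem_biUnion.mpr ⟨j, hj, (Finset.mem_inter.mp hij).2⟩)
  · rw [if_neg hiA]
    rw [Finset.inter_insert_of_notMem hiA, hAB, Finset.card_biUnion hdisj]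
    omega

end DsSec

/-! ### the parity join and coloring -/

section Defs
variable (f : E → Sym2 V) (Edges : Finset E) (n : ℕ) (v : ℕ → V) (p : ℕ → ℕ) (pe : ℕ → E)

noncomputable def Sv : Finset ℕ := (range n).filter (fun i => Even (deg f Edges (v i)))

noncomputable def Kv : Finset ℕ :=
  (range n).filter (fun i => i ≠ 0 ∧ Odd ((Sv f Edges n v ∩ Ds n p i).card))

noncomputable def KC (i : ℕ) : Finset ℕ := (Kv f Edges n v p).filter (fun j => p j = i)

noncomputable def dK (i : ℕ) : ℕ :=
  (if i ∈ Kv f Edges n v p then 1 else 0) + (KC f Edges n v p i).card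

noncomputable def col (j : ℕ) : Fin 3 :=
  if h : 0 < j ∧ p j < j then
    if p j ∈ Kv f Edges n v p then
      (if Odd (dK f Edges n v p (p j)) then col (p j) else flip (col (p j)))
    else if p j = 0 ∧ Even (Sv f Edges n v).card then
      (if Even (dK f Edges n v p 0) then 1 else 2)
    else
      (if Odd (dK f Edges n v p (p j)) then 1
       else if (KC f Edges n v p (p j)).min = (j : WithBot ℕ) then 2 else 1)
  else 0
termination_by j
decreasing_by all_goals exact h.2

noncomputable def colo (e : E) : Fin 3 :=
  if h : ∃ j ∈ Kv f Edges n v p, pe j = e then col f Edges n v p h.choose else 0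

end Defs

section KSec
variable {f : E → Sym2 V} {Edges : Finset E} {n : ℕ} {v : ℕ → V} {p : ℕ → ℕ} {pe : ℕ → E}

lemma mem_Sv {i : ℕ} : i ∈ Sv f Edges n v ↔ i < n ∧ Even (deg f Edges (v i)) := by
  simp [Sv]

lemma mem_Kv {i : ℕ} :
    i ∈ Kv f Edges n v p ↔ i < n ∧ i ≠ 0 ∧ Odd ((Sv f Edges n v ∩ Ds n p i).card) := by
  rw [Kv, Finset.mem_filter, Finset.mem_range]

lemma mem_KC {i j : ℕ} : j ∈ KC f Edges n v p i ↔ j ∈ Kv f Edges n v p ∧ p j = i := by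
  simp [KC]

lemma KC_eq_filter_child {i : ℕ} :
    KC f Edges n v p i = (child n p i).filter (fun j => j ∈ Kv f Edges n v p) := by
  ext j
  simp only [mem_KC, Finset.mem_filter, mem_child, mem_Kv]
  constructor
  · rintro ⟨⟨h1, h2, h3⟩, h4⟩
    exact ⟨⟨h1, Nat.pos_of_ne_zero h2, h4⟩, h1, h2, h3⟩
  · rintro ⟨⟨h1, h2, h4⟩, h5⟩
    exact ⟨h5, h4⟩

lemma card_KC_parity {i : ℕ} :
    ((KC f Edges n v p i).card : ZMod 2)
      = ∑ j ∈ child n p i, (((Sv f Edges n v ∩ Ds n p j).card : ℕ) : ZMod 2) := by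
  rw [KC_eq_filter_child, Finset.card_filter, Nat.cast_sum]
  apply Finset.sum_congr rfl
  intro j hj
  rw [mem_child] at hj
  by_cases hKv : j ∈ Kv f Edges n v p
  · rw [if_pos hKv]
    rw [mem_Kv] at hKv
    exact (Nat.cast_one (R := ZMod 2)).trans (ZMod.natCast_eq_one_iff_odd.mpr hKv.2.2).symm
  · rw [if_neg hKv]
    rw [mem_Kv] at hKv
    push_neg at hKv
    have hodd := hKv hj.1 hj.2.1.ne'
    exact (Nat.cast_zero (R := ZMod 2)).trans
      (ZMod.natCast_eq_zero_iff_even.mpr (Nat.not_odd_iff_even.mp hodd)).symm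

lemma ite_Kv_parity {i : ℕ} (hi : i < n) (h0 : i ≠ 0) :
    ((if i ∈ Kv f Edges n v p then 1 else 0 : ℕ) : ZMod 2)
      = (((Sv f Edges n v ∩ Ds n p i).card : ℕ) : ZMod 2) := by
  by_cases hKv : i ∈ Kv f Edges n v p
  · rw [if_pos hKv]; rw [mem_Kv] at hKv
    exact (ZMod.natCast_eq_one_iff_odd.mpr hKv.2.2).symm
  · rw [if_neg hKv]; rw [mem_Kv] at hKv
    push_neg at hKv
    exact (ZMod.natCast_eq_zero_iff_even.mpr (Nat.not_odd_iff_even.mp (hKv hi h0))).symm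

lemma dK_parity_ne (hE : Enum f Edges n v p pe) {i : ℕ} (hi : i < n) (h0 : i ≠ 0) :
    ((dK f Edges n v p i : ℕ) : ZMod 2) = (if i ∈ Sv f Edges n v then 1 else 0) := by
  have hkey := card_inter_Ds (n := n) (p := p) hE.plt (Sv f Edges n v) hi
  have h2 : (((Sv f Edges n v ∩ Ds n p i).card : ℕ) : ZMod 2)
      = (if i ∈ Sv f Edges n v then 1 else 0)
        + ∑ j ∈ child n p i, (((Sv f Edges n v ∩ Ds n p j).card : ℕ) : ZMod 2) := by
    rw [hkey, Nat.cast_add, Nat.cast_sum]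
    congr 1
    split <;> simp
  rw [dK, Nat.cast_add, ite_Kv_parity hi h0, card_KC_parity, h2,
    add_assoc, CharTwo.add_self_eq_zero, add_zero]

end KSec

section ColSec
variable {f : E → Sym2 V} {Edges : Finset E} {n : ℕ} {v : ℕ → V} {p : ℕ → ℕ} {pe : ℕ → E}

lemma flip_vals (a : Fin 3) : flip a = 1 ∨ flip a = 2 := by
  unfold flip; split
  · exact Or.inr rfl
  · exact Or.inl rfl

lemma flip_one : flip 1 = 2 := rfl
lemma flip_two : flip 2 = 1 := by decide

lemma flip_ne {a : Fin 3} (h : a = 1 ∨ a = 2) : flip a ≠ a := by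
  rcases h with rfl | rfl
  · rw [flip_one]; decide
  · rw [flip_two]; decide

lemma Kv_guard (hE : Enum f Edges n v p pe) {j : ℕ} (hj : j ∈ Kv f Edges n v p) :
    0 < j ∧ p j < j := by
  rw [mem_Kv] at hj
  have h0 := Nat.pos_of_ne_zero hj.2.1
  exact ⟨h0, hE.plt j h0 hj.1⟩

lemma col_vals (hE : Enum f Edges n v p pe) :
    ∀ j ∈ Kv f Edges n v p, col f Edges n v p j = 1 ∨ col f Edges n v p j = 2 := by
  intro j
  induction j using Nat.strong_induction_on with
  | _ j IH =>
    intro hj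
    rw [col, dif_pos (Kv_guard hE hj)]
    by_cases h1 : p j ∈ Kv f Edges n v p
    · rw [if_pos h1]
      split
      · exact IH _ (Kv_guard hE hj).2 h1
      · exact flip_vals _
    · rw [if_neg h1]
      split
      · split <;> simp
      · split
        · exact Or.inl rfl
        · split <;> simp

lemma col_ne_zero (hE : Enum f Edges n v p pe) {j : ℕ} (hj : j ∈ Kv f Edges n v p) :
    col f Edges n v p j ≠ 0 := by
  rcases col_vals hE j hj with h | h <;> rw [h] <;> decide

/-- unfolding of the color of the parent edge of a `K`-child of `i` -/
lemma col_child (hE : Enum f Edges n v p pe) {i j : ℕ} (hj : j ∈ Kv f Edges n v p)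
    (hpj : p j = i) :
    col f Edges n v p j =
      if i ∈ Kv f Edges n v p then
        (if Odd (dK f Edges n v p i) then col f Edges n v p i else flip (col f Edges n v p i))
      else if i = 0 ∧ Even (Sv f Edges n v).card then
        (if Even (dK f Edges n v p 0) then 1 else 2)
      else
        (if Odd (dK f Edges n v p i) then 1
         else if (KC f Edges n v p i).min = (j : WithBot ℕ) then 2 else 1) := by
  rw [col, dif_pos (Kv_guard hE hj), hpj]

lemma pe_inj (hE : Enum f Edges n v p pe) {j j' : ℕ} (hj0 : 0 < j) (hjn : j < n)
    (hj0' : 0 < j') (hjn' : j' < n) (h : pe j = pe j') : j = j' := by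
  have h1 := hE.pf j hj0 hjn
  have h2 := hE.pf j' hj0' hjn'
  rw [h, h2] at h1
  rw [Sym2.eq_iff] at h1
  have hp := hE.plt j hj0 hjn
  have hp' := hE.plt j' hj0' hjn'
  rcases h1 with ⟨_, h1b⟩ | ⟨h1a, h1b⟩
  · exact (hE.inj j' hjn' j hjn h1b).symm
  · have e1 : p j' = j := hE.inj _ (hp'.trans hjn') _ hjn h1a
    have e2 : j' = p j := hE.inj _ hjn' _ (hp.trans hjn) h1b
    omega

lemma incid (hE : Enum f Edges n v p pe) {i j : ℕ} (hi : i < n) (hj0 : 0 < j) (hjn : j < n) :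
    v i ∈ f (pe j) ↔ (j = i ∨ p j = i) := by
  rw [hE.pf j hj0 hjn, Sym2.mem_iff]
  have hp := hE.plt j hj0 hjn
  constructor
  · rintro (h | h)
    · exact Or.inr (hE.inj _ hi _ (hp.trans hjn) h).symm
    · exact Or.inl (hE.inj _ hi _ hjn h).symm
  · rintro (rfl | h)
    · exact Or.inr rfl
    · rw [h]; exact Or.inl rfl

lemma colo_pe (hE : Enum f Edges n v p pe) {j : ℕ} (hj : j ∈ Kv f Edges n v p) :
    colo f Edges n v p pe (pe j) = col f Edges n v p j := by
  have hex : ∃ j' ∈ Kv f Edges n v p, pe j' = pe j := ⟨j, hj, rfl⟩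
  rw [colo, dif_pos hex]
  obtain ⟨hmem, heq⟩ := hex.choose_spec
  have b1 := Kv_guard hE hmem
  have b2 := Kv_guard hE hj
  rw [mem_Kv] at hmem hj
  congr 1
  exact pe_inj hE b1.1 hmem.1 b2.1 hj.1 heq

lemma colo_ne_zero_iff (hE : Enum f Edges n v p pe) (e : E) :
    colo f Edges n v p pe e ≠ 0 ↔ ∃ j ∈ Kv f Edges n v p, pe j = e := by
  constructor
  · intro h
    by_contra hc
    rw [colo, dif_neg hc] at h
    exact h rfl
  · rintro ⟨j, hj, rfl⟩
    rw [colo_pe hE hj]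
    exact col_ne_zero hE hj

end ColSec

section Defs2
variable (f : E → Sym2 V) (Edges : Finset E) (n : ℕ) (v : ℕ → V) (p : ℕ → ℕ) (pe : ℕ → E)

noncomputable def Kinc (i : ℕ) (γ : Fin 3) : Finset ℕ :=
  (Kv f Edges n v p).filter (fun j => (j = i ∨ p j = i) ∧ col f Edges n v p j = γ)

noncomputable def KincAll (i : ℕ) : Finset ℕ :=
  (Kv f Edges n v p).filter (fun j => j = i ∨ p j = i)

end Defs2

section CountSec
variable {f : E → Sym2 V} {Edges : Finset E} {n : ℕ} {v : ℕ → V} {p : ℕ → ℕ} {pe : ℕ → E}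

lemma ccard_eq_Kinc (hE : Enum f Edges n v p pe) {i : ℕ} (hi : i < n) {γ : Fin 3}
    (hγ : γ ≠ 0) :
    ccard f Edges (colo f Edges n v p pe) (v i) γ = (Kinc f Edges n v p i γ).card := by
  rw [ccard]
  have himg : Edges.filter (fun e => v i ∈ f e ∧ colo f Edges n v p pe e = γ)
      = (Kinc f Edges n v p i γ).image pe := by
    ext e
    simp only [Finset.mem_filter, Finset.mem_image, Kinc]
    constructor
    · rintro ⟨he, hvf, hc⟩
      have hnz : colo f Edges n v p pe e ≠ 0 := by rw [hc]; exact hγ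
      obtain ⟨j, hj, rfl⟩ := (colo_ne_zero_iff hE e).mp hnz
      have hb := Kv_guard hE hj
      have hjn : j < n := (mem_Kv.mp hj).1
      refine ⟨j, ⟨hj, ?_, ?_⟩, rfl⟩
      · exact (incid hE hi hb.1 hjn).mp hvf
      · rw [← colo_pe hE hj]; exact hc
    · rintro ⟨j, ⟨hj, hji, hc⟩, rfl⟩
      have hb := Kv_guard hE hj
      have hjn : j < n := (mem_Kv.mp hj).1
      exact ⟨hE.pmem j hb.1 hjn, (incid hE hi hb.1 hjn).mpr hji, by rw [colo_pe hE hj]; exact hc⟩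
  rw [himg]
  apply Finset.card_image_of_injOn
  intro j hj j' hj' heq
  simp only [Kinc, Finset.mem_coe, Finset.mem_filter] at hj hj'
  have b := Kv_guard hE hj.1
  have b' := Kv_guard hE hj'.1
  exact pe_inj hE b.1 (mem_Kv.mp hj.1).1 b'.1 (mem_Kv.mp hj'.1).1 heq

lemma card_nonzero_eq (hE : Enum f Edges n v p pe) {i : ℕ} (hi : i < n) :
    (Edges.filter (fun e => v i ∈ f e ∧ colo f Edges n v p pe e ≠ 0)).card
      = dK f Edges n v p i := by
  have himg : Edges.filter (fun e => v i ∈ f e ∧ colo f Edges n v p pe e ≠ 0)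
      = (KincAll f Edges n v p i).image pe := by
    ext e
    simp only [Finset.mem_filter, Finset.mem_image, KincAll]
    constructor
    · rintro ⟨he, hvf, hnz⟩
      obtain ⟨j, hj, rfl⟩ := (colo_ne_zero_iff hE e).mp hnz
      have hb := Kv_guard hE hj
      have hjn : j < n := (mem_Kv.mp hj).1
      exact ⟨j, ⟨hj, (incid hE hi hb.1 hjn).mp hvf⟩, rfl⟩
    · rintro ⟨j, ⟨hj, hji⟩, rfl⟩
      have hb := Kv_guard hE hj
      have hjn : j < n := (mem_Kv.mp hj).1
      refine ⟨hE.pmem j hb.1 hjn, (incid hE hi hb.1 hjn).mpr hji, ?_⟩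
      exact (colo_ne_zero_iff hE _).mpr ⟨j, hj, rfl⟩
  rw [himg]
  have hcard : (KincAll f Edges n v p i).card = dK f Edges n v p i := by
    rw [dK]
    by_cases hiK : i ∈ Kv f Edges n v p
    · rw [if_pos hiK]
      have : KincAll f Edges n v p i = insert i (KC f Edges n v p i) := by
        ext j
        simp only [KincAll, Finset.mem_filter, Finset.mem_insert, mem_KC]
        constructor
        · rintro ⟨hj, rfl | hpj⟩
          · exact Or.inl rfl
          · exact Or.inr ⟨hj, hpj⟩
        · rintro (rfl | ⟨hj, hpj⟩)
          · exact ⟨hiK, Or.inl rfl⟩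
          · exact ⟨hj, Or.inr hpj⟩
      rw [this, Finset.card_insert_of_notMem]
      · omega
      · intro hmem
        have := (mem_KC.mp hmem).2
        have := (Kv_guard hE hiK).2
        omega
    · rw [if_neg hiK]
      have : KincAll f Edges n v p i = KC f Edges n v p i := by
        ext j
        simp only [KincAll, Finset.mem_filter, mem_KC]
        constructor
        · rintro ⟨hj, rfl | hpj⟩
          · exact absurd hj hiK
          · exact ⟨hj, hpj⟩
        · rintro ⟨hj, hpj⟩
          exact ⟨hj, Or.inr hpj⟩
      rw [this]
      omega
  rw [← hcard]
  apply Finset.card_image_of_injOn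
  intro j hj j' hj' heq
  simp only [KincAll, Finset.mem_coe, Finset.mem_filter] at hj hj'
  have b := Kv_guard hE hj.1
  have b' := Kv_guard hE hj'.1
  exact pe_inj hE b.1 (mem_Kv.mp hj.1).1 b'.1 (mem_Kv.mp hj'.1).1 heq

lemma dK_le_deg (hE : Enum f Edges n v p pe) {i : ℕ} (hi : i < n) :
    dK f Edges n v p i ≤ deg f Edges (v i) := by
  rw [← card_nonzero_eq hE hi, deg]
  apply Finset.card_le_card
  intro e he
  rw [Finset.mem_filter] at he ⊢
  exact ⟨he.1, he.2.1⟩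

lemma ccard_zero_eq (hE : Enum f Edges n v p pe) {i : ℕ} (hi : i < n) :
    ccard f Edges (colo f Edges n v p pe) (v i) 0
      = deg f Edges (v i) - dK f Edges n v p i := by
  rw [ccard, ← card_nonzero_eq hE hi, deg]
  rw [← Finset.card_sdiff_of_subset]
  · congr 1
    ext e
    simp only [Finset.mem_sdiff, Finset.mem_filter]
    constructor
    · rintro ⟨he, hvf, hc⟩
      exact ⟨⟨he, hvf⟩, fun h => h.2.2 (by rw [hc])⟩
    · rintro ⟨⟨he, hvf⟩, hn⟩
      refine ⟨he, hvf, ?_⟩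
      by_contra hc
      exact hn ⟨he, hvf, hc⟩
  · intro e he
    rw [Finset.mem_filter] at he ⊢
    exact ⟨he.1, he.2.1⟩

lemma Kinc_card_split (hE : Enum f Edges n v p pe) {i : ℕ} {γ : Fin 3} :
    (Kinc f Edges n v p i γ).card
      = (if i ∈ Kv f Edges n v p ∧ col f Edges n v p i = γ then 1 else 0)
        + ((KC f Edges n v p i).filter (fun j => col f Edges n v p j = γ)).card := by
  by_cases hc : i ∈ Kv f Edges n v p ∧ col f Edges n v p i = γ
  · rw [if_pos hc]
    have : Kinc f Edges n v p i γ
        = insert i ((KC f Edges n v p i).filter (fun j => col f Edges n v p j = γ)) := by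
      ext j
      simp only [Kinc, Finset.mem_filter, Finset.mem_insert, mem_KC]
      constructor
      · rintro ⟨hj, rfl | hpj, hcol⟩
        · exact Or.inl rfl
        · exact Or.inr ⟨⟨hj, hpj⟩, hcol⟩
      · rintro (rfl | ⟨⟨hj, hpj⟩, hcol⟩)
        · exact ⟨hc.1, Or.inl rfl, hc.2⟩
        · exact ⟨hj, Or.inr hpj, hcol⟩
    rw [this, Finset.card_insert_of_notMem]
    · omega
    · intro hmem
      rw [Finset.mem_filter, mem_KC] at hmem
      have := hmem.1.2
      have := (Kv_guard hE hc.1).2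
      omega
  · rw [if_neg hc]
    have : Kinc f Edges n v p i γ
        = (KC f Edges n v p i).filter (fun j => col f Edges n v p j = γ) := by
      ext j
      simp only [Kinc, Finset.mem_filter, mem_KC]
      constructor
      · rintro ⟨hj, rfl | hpj, hcol⟩
        · exact absurd ⟨hj, hcol⟩ hc
        · exact ⟨⟨hj, hpj⟩, hcol⟩
      · rintro ⟨⟨hj, hpj⟩, hcol⟩
        exact ⟨hj, Or.inr hpj, hcol⟩
    rw [this]
    omega

lemma two_cases {α γ : Fin 3} (hα : α = 1 ∨ α = 2) (hγ : γ = 1 ∨ γ = 2) (hne : γ ≠ α) :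
    γ = flip α := by
  rcases hα with rfl | rfl <;> rcases hγ with rfl | rfl <;> first | rfl | (exact absurd rfl hne) | decide

lemma odd_sub_one {k : ℕ} (h : ¬ Odd k) (h0 : k ≠ 0) : Odd (k - 1) := by
  rw [Nat.odd_iff] at h ⊢
  omega

lemma K_classes_ok (hE : Enum f Edges n v p pe) {i : ℕ} (hi : i < n)
    (hcase : ¬(i = 0 ∧ Even (Sv f Edges n v).card)) {γ : Fin 3} (hγ : γ = 1 ∨ γ = 2) :
    OK ((Kinc f Edges n v p i γ).card) := by
  rw [Kinc_card_split hE]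
  by_cases hiK : i ∈ Kv f Edges n v p
  · have hα := col_vals hE i hiK
    have hchild : ∀ j ∈ KC f Edges n v p i,
        col f Edges n v p j = (if Odd (dK f Edges n v p i) then col f Edges n v p i
          else flip (col f Edges n v p i)) := by
      intro j hj
      obtain ⟨hjK, hpj⟩ := mem_KC.mp hj
      rw [col_child hE hjK hpj, if_pos hiK]
    have hdK : dK f Edges n v p i = 1 + (KC f Edges n v p i).card := by
      rw [dK, if_pos hiK]
    by_cases hodd : Odd (dK f Edges n v p i)
    · rw [if_pos hodd] at hchild
      by_cases hγα : γ = col f Edges n v p i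
      · rw [if_pos ⟨hiK, hγα.symm⟩, Finset.filter_true_of_mem (fun j hj => (hchild j hj).trans hγα.symm)]
        exact OK_of_odd (by rw [← hdK]; exact hodd)
      · rw [if_neg (fun hc => hγα hc.2.symm), Finset.filter_false_of_mem
          (fun j hj hc => hγα (hc.symm.trans (hchild j hj))), Finset.card_empty]
        exact OK_zero
    · rw [if_neg hodd] at hchild
      have hfa : flip (col f Edges n v p i) ≠ col f Edges n v p i := flip_ne hα
      by_cases hγα : γ = col f Edges n v p i
      · rw [if_pos ⟨hiK, hγα.symm⟩, Finset.filter_false_of_mem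
          (fun j hj hc => hfa (((hchild j hj).symm.trans hc).trans hγα)), Finset.card_empty]
        exact OK_of_odd (by decide)
      · have hγf : γ = flip (col f Edges n v p i) := two_cases hα hγ hγα
        rw [if_neg (fun hc => hγα hc.2.symm), Finset.filter_true_of_mem
          (fun j hj => (hchild j hj).trans hγf.symm)]
        have h0 : dK f Edges n v p i ≠ 0 := by omega
        have h1 := odd_sub_one hodd h0
        rw [hdK] at h1
        exact OK_of_odd (by simpa using h1)
  · have hdK : dK f Edges n v p i = (KC f Edges n v p i).card := by
      rw [dK, if_neg hiK]; omega
    rw [if_neg (fun hc => hiK hc.1)]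
    have hchild : ∀ j ∈ KC f Edges n v p i,
        col f Edges n v p j = (if Odd (dK f Edges n v p i) then (1 : Fin 3)
          else if (KC f Edges n v p i).min = (j : WithBot ℕ) then 2 else 1) := by
      intro j hj
      obtain ⟨hjK, hpj⟩ := mem_KC.mp hj
      rw [col_child hE hjK hpj, if_neg hiK, if_neg hcase]
    by_cases hodd : Odd (dK f Edges n v p i)
    · simp only [if_pos hodd] at hchild
      rcases hγ with rfl | rfl
      · rw [Finset.filter_true_of_mem (fun j hj => hchild j hj)]
        exact OK_of_odd (by simp only [zero_add]; rw [← hdK]; exact hodd)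
      · rw [Finset.filter_false_of_mem (fun j hj hc => by
          rw [hchild j hj] at hc; exact absurd hc (by decide)), Finset.card_empty]
        exact OK_zero
    · simp only [if_neg hodd] at hchild
      by_cases hKCe : (KC f Edges n v p i).card = 0
      · have : (KC f Edges n v p i) = ∅ := Finset.card_eq_zero.mp hKCe
        rw [this, Finset.filter_empty, Finset.card_empty]
        simpa using OK_zero
      · obtain ⟨j₀, hj₀⟩ := Finset.min_of_nonempty
          (Finset.card_pos.mp (Nat.pos_of_ne_zero hKCe))
        have hj₀m : j₀ ∈ KC f Edges n v p i := Finset.mem_of_min hj₀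
        rcases hγ with rfl | rfl
        · have : (KC f Edges n v p i).filter (fun j => col f Edges n v p j = 1)
              = (KC f Edges n v p i).erase j₀ := by
            ext j
            rw [Finset.mem_filter, Finset.mem_erase]
            constructor
            · rintro ⟨hj, hcol⟩
              refine ⟨?_, hj⟩
              rintro rfl
              rw [hchild j hj, hj₀] at hcol
              simp at hcol
              exact hcol rfl
            · rintro ⟨hne, hj⟩
              refine ⟨hj, ?_⟩
              rw [hchild j hj, if_neg ?_]
              intro hc
              rw [hj₀] at hc
              exact hne (WithBot.coe_inj.mp hc).symm
          rw [this, Finset.card_erase_of_mem hj₀m]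
          exact OK_of_odd (by
            simp only [zero_add]
            exact odd_sub_one (by rwa [hdK] at hodd) hKCe)
        · have : (KC f Edges n v p i).filter (fun j => col f Edges n v p j = 2) = {j₀} := by
            ext j
            rw [Finset.mem_filter, Finset.mem_singleton]
            constructor
            · rintro ⟨hj, hcol⟩
              rw [hchild j hj] at hcol
              by_contra hne
              rw [if_neg (fun hc => hne (by rw [hj₀] at hc; exact (WithBot.coe_inj.mp hc).symm))] at hcol
              exact absurd hcol (by decide)
            · intro hj
              rw [hj]
              refine ⟨hj₀m, ?_⟩
              rw [hchild j₀ hj₀m, hj₀]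
              simp
              rfl
          rw [this, Finset.card_singleton]
          exact OK_of_odd (by simp only [zero_add]; decide)

lemma K_classes_root (hE : Enum f Edges n v p pe) (hS : Even (Sv f Edges n v).card) :
    OK ((Kinc f Edges n v p 0 2).card) ∧ Even ((Kinc f Edges n v p 0 1).card) := by
  have h0K : (0 : ℕ) ∉ Kv f Edges n v p := by
    intro h
    exact (mem_Kv.mp h).2.1 rfl
  have hdK : dK f Edges n v p 0 = (KC f Edges n v p 0).card := by
    rw [dK, if_neg h0K]; omega
  have hchild : ∀ j ∈ KC f Edges n v p 0,
      col f Edges n v p j = (if Even (dK f Edges n v p 0) then (1:Fin 3) else 2) := by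
    intro j hj
    obtain ⟨hjK, hpj⟩ := mem_KC.mp hj
    rw [col_child hE hjK hpj, if_neg h0K, if_pos ⟨rfl, hS⟩]
  have hsplit1 := Kinc_card_split hE (f := f) (Edges := Edges) (n := n) (v := v) (p := p) (i := 0) (γ := 1)
  have hsplit2 := Kinc_card_split hE (f := f) (Edges := Edges) (n := n) (v := v) (p := p) (i := 0) (γ := 2)
  rw [if_neg (fun hc => h0K hc.1)] at hsplit1 hsplit2
  by_cases hev : Even (dK f Edges n v p 0)
  · simp only [if_pos hev] at hchild
    constructor
    · rw [hsplit2, Finset.filter_false_of_mem (fun j hj hc => by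
        rw [hchild j hj] at hc; exact absurd hc (by decide)), Finset.card_empty]
      exact OK_zero
    · rw [hsplit1, Finset.filter_true_of_mem (fun j hj => hchild j hj)]
      simpa [← hdK] using hev
  · simp only [if_neg hev] at hchild
    constructor
    · rw [hsplit2, Finset.filter_true_of_mem (fun j hj => hchild j hj)]
      refine OK_of_odd ?_
      have : Odd (dK f Edges n v p 0) := Nat.not_even_iff_odd.mp hev
      rw [hdK] at this
      simpa using this
    · rw [hsplit1, Finset.filter_false_of_mem (fun j hj hc => by
        rw [hchild j hj] at hc; exact absurd hc (by decide)), Finset.card_empty]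
      simp

lemma dK_parity_zero (hE : Enum f Edges n v p pe) :
    ((dK f Edges n v p 0 : ℕ) : ZMod 2)
      = ((Sv f Edges n v).card : ZMod 2) + (if 0 ∈ Sv f Edges n v then 1 else 0) := by
  have h0K : (0 : ℕ) ∉ Kv f Edges n v p := fun h => (mem_Kv.mp h).2.1 rfl
  have hdK : dK f Edges n v p 0 = (KC f Edges n v p 0).card := by
    rw [dK, if_neg h0K]; omega
  have hSD : Sv f Edges n v ∩ Ds n p 0 = Sv f Edges n v := by
    apply Finset.inter_eq_left.mpr
    rw [Ds_zero hE]
    intro i hi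
    exact (mem_Sv.mp hi).1 |> Finset.mem_range.mpr
  have hkey := card_inter_Ds (n := n) (p := p) hE.plt (Sv f Edges n v) hE.npos
  rw [hSD] at hkey
  have h2 : ((Sv f Edges n v).card : ZMod 2)
      = (if 0 ∈ Sv f Edges n v then 1 else 0)
        + ∑ j ∈ child n p 0, (((Sv f Edges n v ∩ Ds n p j).card : ℕ) : ZMod 2) := by
    rw [hkey, Nat.cast_add, Nat.cast_sum]
    congr 1
    split <;> simp
  rw [hdK, card_KC_parity]
  have h3 : ∀ a b c : ZMod 2, a = b + c → c = a + b := by decide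
  exact h3 _ _ _ h2

lemma deg_parity (hi : i < n) :
    ((deg f Edges (v i) : ℕ) : ZMod 2) = 1 + (if i ∈ Sv f Edges n v then 1 else 0) := by
  by_cases h : i ∈ Sv f Edges n v
  · rw [if_pos h]
    rw [ZMod.natCast_eq_zero_iff_even.mpr (mem_Sv.mp h).2] at *
    · decide
  · rw [if_neg h]
    have : ¬ Even (deg f Edges (v i)) := fun he => h (mem_Sv.mpr ⟨hi, he⟩)
    rw [ZMod.natCast_eq_one_iff_odd.mpr (Nat.not_even_iff_odd.mp this)]
    decide

lemma class0_odd_ne (hE : Enum f Edges n v p pe) {i : ℕ} (hi : i < n) (h0 : i ≠ 0) :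
    Odd (ccard f Edges (colo f Edges n v p pe) (v i) 0) := by
  rw [← ZMod.natCast_eq_one_iff_odd, ccard_zero_eq hE hi,
    Nat.cast_sub (dK_le_deg hE hi), dK_parity_ne hE hi h0, deg_parity hi]
  split <;> decide

lemma class0_root (hE : Enum f Edges n v p pe) :
    ((ccard f Edges (colo f Edges n v p pe) (v 0) 0 : ℕ) : ZMod 2)
      = 1 + ((Sv f Edges n v).card : ZMod 2) := by
  rw [ccard_zero_eq hE hE.npos, Nat.cast_sub (dK_le_deg hE hE.npos),
    dK_parity_zero hE, deg_parity hE.npos]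
  have : ∀ a b : ZMod 2, (1 + a) - (b + a) = 1 + b := by decide
  exact this _ _

lemma ccard_not_covered (hE : Enum f Edges n v p pe) {w : V}
    (hw : ∀ i, i < n → v i ≠ w) (c : E → Fin 3) (γ : Fin 3) :
    ccard f Edges c w γ = 0 := by
  rw [ccard, Finset.card_eq_zero]
  rw [Finset.filter_eq_empty_iff]
  rintro e he ⟨hvf, _⟩
  obtain ⟨i, hi, hvi⟩ := hE.cover e he w hvf
  exact hw i hi hvi

/-- The core theorem: an odd 3-coloring with at most one bad (even) class at the root. -/
theorem core (hE : Enum f Edges n v p pe) :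
    ∃ (c : E → Fin 3) (δ : Fin 3),
      (∀ w, w ≠ v 0 → ∀ γ, OK (ccard f Edges c w γ)) ∧
      (∀ γ, γ ≠ δ → OK (ccard f Edges c (v 0) γ)) ∧
      Even (ccard f Edges c (v 0) δ) := by
  classical
  refine ⟨colo f Edges n v p pe, if Even (Sv f Edges n v).card then 1 else 0, ?_, ?_, ?_⟩
  · intro w hw γ
    by_cases hcov : ∃ i, i < n ∧ v i = w
    · obtain ⟨i, hi, rfl⟩ := hcov
      have h0 : i ≠ 0 := fun h => hw (by rw [h])
      rcases show γ = 0 ∨ γ = 1 ∨ γ = 2 by omega with rfl | hγ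
      · exact OK_of_odd (class0_odd_ne hE hi h0)
      · have hγ0 : γ ≠ 0 := by rcases hγ with rfl | rfl <;> decide
        rw [ccard_eq_Kinc hE hi hγ0]
        exact K_classes_ok hE hi (fun hc => h0 hc.1) hγ
    · push_neg at hcov
      rw [ccard_not_covered hE (fun i hi hvi => hcov i hi hvi) _ γ]
      exact OK_zero
  · intro γ hγδ
    by_cases hS : Even (Sv f Edges n v).card
    · rw [if_pos hS] at hγδ
      rcases show γ = 0 ∨ γ = 1 ∨ γ = 2 by omega with rfl | rfl | rfl
      · refine OK_of_odd ?_
        rw [← ZMod.natCast_eq_one_iff_odd, class0_root hE, ZMod.natCast_eq_zero_iff_even.mpr hS, add_zero]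
      · exact absurd rfl hγδ
      · rw [ccard_eq_Kinc hE hE.npos (by decide)]
        exact (K_classes_root hE hS).1
    · rw [if_neg hS] at hγδ
      rcases show γ = 0 ∨ γ = 1 ∨ γ = 2 by omega with rfl | hγ
      · exact absurd rfl hγδ
      · have hγ0 : γ ≠ 0 := by rcases hγ with rfl | rfl <;> decide
        rw [ccard_eq_Kinc hE hE.npos hγ0]
        exact K_classes_ok hE hE.npos (fun hc => hS hc.2) hγ
  · by_cases hS : Even (Sv f Edges n v).card
    · rw [if_pos hS, ccard_eq_Kinc hE hE.npos (by decide)]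
      exact (K_classes_root hE hS).2
    · rw [if_neg hS, ← Nat.not_odd_iff_even, ← ZMod.natCast_eq_one_iff_odd, class0_root hE,
        ZMod.natCast_eq_one_iff_odd.mpr (Nat.not_even_iff_odd.mp hS)]
      decide

end CountSec

/-! ### building the enumeration from connectivity -/

def Rrel (f : E → Sym2 V) (Edges : Finset E) (a b : V) : Prop := ∃ e ∈ Edges, f e = s(a, b)

section BuildSec
variable {f : E → Sym2 V} {Edges : Finset E} {x : V}

lemma Rrel_symm {a b : V} (h : Rrel f Edges a b) : Rrel f Edges b a := by
  obtain ⟨e, he, hf⟩ := h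
  exact ⟨e, he, by rw [hf, Sym2.eq_swap]⟩

lemma exists_cross {A : Finset V} (hx : x ∈ A) {w : V}
    (hr : Relation.ReflTransGen (Rrel f Edges) x w) (hw : w ∉ A) :
    ∃ a ∈ A, ∃ b, b ∉ A ∧ Rrel f Edges a b ∧ Relation.ReflTransGen (Rrel f Edges) x b := by
  induction hr with
  | refl => exact absurd hx hw
  | tail hxc hcb ih =>
    next c w' =>
      by_cases hc : c ∈ A
      · exact ⟨c, hc, w', hw, hcb, hxc.tail hcb⟩
      · exact ih hc

/-- invariant of the growing list -/
def GoodL (f : E → Sym2 V) (Edges : Finset E) (x : V) (L : List V) : Prop :=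
  L.Nodup ∧ 0 < L.length ∧ L.getD 0 x = x ∧
  (∀ u ∈ L, Relation.ReflTransGen (Rrel f Edges) x u) ∧
  (∀ i, 0 < i → i < L.length → ∃ j, j < i ∧ ∃ e ∈ Edges, f e = s(L.getD j x, L.getD i x))

lemma build [Fintype V] : ∀ (k : ℕ) (L : List V), GoodL f Edges x L →
    ((Finset.univ.filter (fun u => Relation.ReflTransGen (Rrel f Edges) x u)).card ≤ L.length + k) →
    ∃ L', GoodL f Edges x L' ∧ ∀ u, Relation.ReflTransGen (Rrel f Edges) x u → u ∈ L' := by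
  intro k
  induction k with
  | zero =>
    intro L hL hcard
    refine ⟨L, hL, ?_⟩
    intro u hu
    have hsub : L.toFinset ⊆ Finset.univ.filter (fun u => Relation.ReflTransGen (Rrel f Edges) x u) := by
      intro a ha
      rw [Finset.mem_filter]
      exact ⟨Finset.mem_univ a, hL.2.2.2.1 a (List.mem_toFinset.mp ha)⟩
    have hlen : L.toFinset.card = L.length := List.toFinset_card_of_nodup hL.1
    have : L.toFinset = Finset.univ.filter (fun u => Relation.ReflTransGen (Rrel f Edges) x u) := by
      apply Finset.eq_of_subset_of_card_le hsub
      rw [hlen]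
      simpa using hcard
    have hu2 : u ∈ L.toFinset := by
      rw [this, Finset.mem_filter]
      exact ⟨Finset.mem_univ u, hu⟩
    exact List.mem_toFinset.mp hu2
  | succ k IH =>
    intro L hL hcard
    by_cases hdone : ∀ u, Relation.ReflTransGen (Rrel f Edges) x u → u ∈ L
    · exact ⟨L, hL, hdone⟩
    · push_neg at hdone
      obtain ⟨w, hwreach, hwL⟩ := hdone
      have hxA : x ∈ L.toFinset := by
        rw [List.mem_toFinset]
        have h0 := hL.2.1
        have := hL.2.2.1
        rw [List.getD_eq_getElem L x h0] at this
        rw [← this]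
        exact List.getElem_mem h0
      obtain ⟨a, haA, b, hbA, hab, hbreach⟩ :=
        exists_cross hxA hwreach (by rwa [List.mem_toFinset])
      rw [List.mem_toFinset] at haA hbA
      refine IH (L ++ [b]) ?_ ?_
      · obtain ⟨e, he, hfe⟩ := hab
        obtain ⟨⟨ja, hja⟩, hgeta⟩ := List.mem_iff_get.mp haA
        constructor
        · simp [List.nodup_append, hL.1, hbA]
          exact fun a ha hab => hbA (hab ▸ ha)
        constructor
        · simp
        constructor
        · rw [List.getD_append _ _ _ _ hL.2.1]
          exact hL.2.2.1
        constructor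
        · intro u hu
          rcases List.mem_append.mp hu with hu | hu
          · exact hL.2.2.2.1 u hu
          · rw [List.mem_singleton.mp hu]
            exact hbreach
        · intro i hi0 hilen
          rw [List.length_append, List.length_singleton] at hilen
          by_cases hiL : i < L.length
          · obtain ⟨j, hj, e', he', hfe'⟩ := hL.2.2.2.2 i hi0 hiL
            refine ⟨j, hj, e', he', ?_⟩
            rw [List.getD_append _ _ _ _ (hj.trans hiL), List.getD_append _ _ _ _ hiL]
            exact hfe'
          · have hieq : i = L.length := by omega
            refine ⟨ja, by omega, e, he, ?_⟩
            rw [hieq, List.getD_append _ _ _ _ hja]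
            have h1 : (L ++ [b]).getD L.length x = b := by
              rw [List.getD_append_right _ _ _ _ (le_refl _)]
              simp
            rw [h1]
            rw [List.getD_eq_getElem L x hja]
            have : L[ja] = a := hgeta
            rw [this]
            exact hfe
      · rw [List.length_append, List.length_singleton]
        omega

lemma exists_enum [Fintype V] (f : E → Sym2 V) (Edges : Finset E) (x : V) (ejunk : E)
    (hreach : ∀ e ∈ Edges, ∀ u ∈ f e, Relation.ReflTransGen (Rrel f Edges) x u) :
    ∃ n v p pe, Enum f Edges n v p pe ∧ v 0 = x := by
  classical
  have h0 : GoodL f Edges x [x] := by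
    refine ⟨List.nodup_singleton x, by simp, by simp, ?_, ?_⟩
    · intro u hu
      rw [List.mem_singleton.mp hu]
    · intro i hi0 hilen
      simp at hilen
      omega
  obtain ⟨L, hL, hcomplete⟩ := build
    ((Finset.univ.filter (fun u => Relation.ReflTransGen (Rrel f Edges) x u)).card) [x] h0
    (by simp)
  set n := L.length with hn
  set v : ℕ → V := fun i => L.getD i x with hv
  have hinj : ∀ i < n, ∀ j < n, v i = v j → i = j := by
    intro i hi j hj hij
    rw [hv] at hij
    simp only at hij
    rw [List.getD_eq_getElem L x hi, List.getD_eq_getElem L x hj] at hij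
    have := List.nodup_iff_injective_get.mp hL.1 (a₁ := ⟨i, hi⟩) (a₂ := ⟨j, hj⟩) (by simpa using hij)
    exact congrArg Fin.val this
  have hprop : ∀ i, 0 < i → i < n → ∃ je : ℕ × E,
      je.1 < i ∧ je.2 ∈ Edges ∧ f je.2 = s(v je.1, v i) := by
    intro i hi0 hilen
    obtain ⟨j, hj, e, he, hfe⟩ := hL.2.2.2.2 i hi0 hilen
    exact ⟨(j, e), hj, he, hfe⟩
  refine ⟨n, v, fun i => if h : 0 < i ∧ i < n then (hprop i h.1 h.2).choose.1 else 0,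
    fun i => if h : 0 < i ∧ i < n then (hprop i h.1 h.2).choose.2 else ejunk, ?_, ?_⟩
  · constructor
    · exact hL.2.1
    · exact hinj
    · intro i h1 h2
      rw [dif_pos ⟨h1, h2⟩]
      exact (hprop i h1 h2).choose_spec.1
    · intro i h1 h2
      rw [dif_pos ⟨h1, h2⟩]
      exact (hprop i h1 h2).choose_spec.2.1
    · intro i h1 h2
      rw [dif_pos ⟨h1, h2⟩, dif_pos ⟨h1, h2⟩]
      exact (hprop i h1 h2).choose_spec.2.2
    · intro e he u hu
      have := hcomplete u (hreach e he u hu)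
      obtain ⟨⟨i, hi⟩, hget⟩ := List.mem_iff_get.mp this
      refine ⟨i, hi, ?_⟩
      rw [hv]
      simp only
      rw [List.getD_eq_getElem L x hi]
      exact hget
  · rw [hv]
    simp only
    exact hL.2.2.1

end BuildSec

/-- Lemma A: every connected piece has an odd 3-coloring with (at most) one even class,
at the root. -/
theorem lemA [Fintype V] (f : E → Sym2 V) (Edges : Finset E) (x : V) (ejunk : E)
    (hreach : ∀ e ∈ Edges, ∀ u ∈ f e, Relation.ReflTransGen (Rrel f Edges) x u) :
    ∃ (c : E → Fin 3) (δ : Fin 3),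
      (∀ w, w ≠ x → ∀ γ, OK (ccard f Edges c w γ)) ∧
      (∀ γ, γ ≠ δ → OK (ccard f Edges c x γ)) ∧
      Even (ccard f Edges c x δ) := by
  obtain ⟨n, v, p, pe, hE, hv0⟩ := exists_enum f Edges x ejunk hreach
  obtain ⟨c, δ, h1, h2, h3⟩ := core hE
  rw [hv0] at h2 h3
  exact ⟨c, δ, fun w hw => h1 w (by rw [hv0]; exact hw), h2, h3⟩

end OddColor

open OddColor in
theorem stmt4' {V E : Type*} [Fintype V] [Fintype E] (f : E → Sym2 V)
    (hloopless : ∀ e, ¬ (f e).IsDiag)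
    (hconn : (SimpleGraph.fromEdgeSet (Set.range f)).Connected)
    (e₀ : E)
    (hbridge : ¬ (SimpleGraph.fromEdgeSet (f '' {e | e ≠ e₀})).Connected) :
    ∃ c : E → Fin 3, ∀ (i : Fin 3) (v : V),
      {e : E | v ∈ f e ∧ c e = i}.ncard ≠ 0 → Odd {e : E | v ∈ f e ∧ c e = i}.ncard := by
  classical
  obtain ⟨⟨x, y⟩, hxy0⟩ := (f e₀).exists_rep
  have hxy : f e₀ = s(x, y) := hxy0.symm
  have hxyne : x ≠ y := by
    intro h
    exact hloopless e₀ (by rw [hxy, h]; exact Sym2.mk_isDiag_iff.mpr rfl)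
  set Eall : Finset E := Finset.univ.erase e₀ with hEall
  set RT := Relation.ReflTransGen (Rrel f Eall) with hRT
  -- symmetry facts
  have hsym : Symmetric RT := fun a b h => (@Relation.ReflTransGen.stdSymm _ (Rrel f Eall) ⟨fun a b h => Rrel_symm h⟩).symm a b h
  -- every vertex reaches x or y
  have key : ∀ (a b : V), (SimpleGraph.fromEdgeSet (Set.range f)).Walk a b →
      ∀ x' y' : V, f e₀ = s(x', y') → (RT x' b ∨ RT y' b) → RT x' a ∨ RT y' a := by
    intro a b w
    induction w with
    | nil => intro x' y' _ hend; exact hend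
    | cons h q ih =>
      intro x' y' hfe hend
      next a' b' _ =>
        obtain ⟨hs, hne⟩ := (SimpleGraph.fromEdgeSet_adj _).mp h
        obtain ⟨e, he⟩ := hs
        by_cases heq : e = e₀
        · rw [heq, hfe] at he
          rcases Sym2.eq_iff.mp he with ⟨rfl, rfl⟩ | ⟨rfl, rfl⟩
          · exact Or.inl Relation.ReflTransGen.refl
          · exact Or.inr Relation.ReflTransGen.refl
        · have hr : Rrel f Eall b' a' := by
            refine ⟨e, Finset.mem_erase.mpr ⟨heq, Finset.mem_univ e⟩, ?_⟩
            rw [he, Sym2.eq_swap]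
          rcases ih x' y' hfe hend with h1 | h1
          · exact Or.inl (h1.tail hr)
          · exact Or.inr (h1.tail hr)
  have reach_or : ∀ u : V, RT x u ∨ RT y u := by
    intro u
    obtain ⟨w⟩ := hconn.preconnected u x
    exact key u x w x y hxy (Or.inl Relation.ReflTransGen.refl)
  -- y is not reachable from x without e₀
  have hnotxy : ¬ RT x y := by
    intro hcon
    apply hbridge
    have hadj : ∀ a b : V, Rrel f Eall a b →
        (SimpleGraph.fromEdgeSet (f '' {e | e ≠ e₀})).Adj a b := by
      rintro a b ⟨e, he, hfe⟩
      rw [SimpleGraph.fromEdgeSet_adj]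
      constructor
      · exact ⟨e, (Finset.mem_erase.mp he).1, hfe⟩
      · intro hab
        exact hloopless e (by rw [hfe, hab]; exact Sym2.mk_isDiag_iff.mpr rfl)
    have hlift : ∀ a b : V, RT a b →
        (SimpleGraph.fromEdgeSet (f '' {e | e ≠ e₀})).Reachable a b := by
      intro a b h
      rw [SimpleGraph.reachable_iff_reflTransGen]
      exact Relation.ReflTransGen.mono (fun a b h => hadj a b h) _ _ h
    rw [SimpleGraph.connected_iff]
    constructor
    · intro a b
      have hax : (SimpleGraph.fromEdgeSet (f '' {e | e ≠ e₀})).Reachable a x := by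
        rcases reach_or a with h | h
        · exact (hlift _ _ h).symm
        · exact ((hlift _ _ h).symm.trans (hlift _ _ hcon).symm)
      have hbx : (SimpleGraph.fromEdgeSet (f '' {e | e ≠ e₀})).Reachable b x := by
        rcases reach_or b with h | h
        · exact (hlift _ _ h).symm
        · exact ((hlift _ _ h).symm.trans (hlift _ _ hcon).symm)
      exact hax.trans hbx.symm
    · exact ⟨x⟩
  have hnotyx : ¬ RT y x := fun h => hnotxy (hsym h)
  have hdisj : ∀ u : V, RT x u → RT y u → False := by
    intro u h1 h2
    exact hnotxy (h1.trans (hsym h2))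
  -- the two sides
  set E₁ : Finset E := Finset.univ.filter (fun e => e ≠ e₀ ∧ ∀ u ∈ f e, RT x u) with hE₁
  set E₂ : Finset E := Finset.univ.filter (fun e => e ≠ e₀ ∧ ∀ u ∈ f e, RT y u) with hE₂
  have mem_E₁ : ∀ e, e ∈ E₁ ↔ e ≠ e₀ ∧ ∀ u ∈ f e, RT x u := by
    intro e; rw [hE₁, Finset.mem_filter]; simp
  have mem_E₂ : ∀ e, e ∈ E₂ ↔ e ≠ e₀ ∧ ∀ u ∈ f e, RT y u := by
    intro e; rw [hE₂, Finset.mem_filter]; simp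
  -- every edge other than e₀ is in E₁ or E₂
  have hsplit : ∀ e, e ≠ e₀ → e ∈ E₁ ∨ e ∈ E₂ := by
    intro e hne
    obtain ⟨⟨a, b⟩, hab0⟩ := (f e).exists_rep
    have hab : f e = s(a, b) := hab0.symm
    have hmem : ∀ u, u ∈ f e ↔ (u = a ∨ u = b) := by
      intro u; rw [hab, Sym2.mem_iff]
    have hstep : Rrel f Eall a b := ⟨e, Finset.mem_erase.mpr ⟨hne, Finset.mem_univ e⟩, hab⟩
    rcases reach_or a with ha | ha
    · left
      rw [mem_E₁]
      refine ⟨hne, ?_⟩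
      intro u hu
      rcases (hmem u).mp hu with rfl | rfl
      · exact ha
      · exact ha.tail hstep
    · right
      rw [mem_E₂]
      refine ⟨hne, ?_⟩
      intro u hu
      rcases (hmem u).mp hu with rfl | rfl
      · exact ha
      · exact ha.tail hstep
  -- restriction of reachability to the sides
  have restrict : ∀ (z : V) (E' : Finset E),
      (∀ e ∈ Eall, (∀ u ∈ f e, RT z u) → e ∈ E') →
      ∀ u, RT z u → Relation.ReflTransGen (Rrel f E') z u := by
    intro z E' hcl u h
    induction h with
    | refl => exact Relation.ReflTransGen.refl
    | tail hb hstep ih =>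
      next b w =>
        obtain ⟨e, he, hfe⟩ := hstep
        have hbw : ∀ u ∈ f e, RT z u := by
          intro u hu
          rw [hfe, Sym2.mem_iff] at hu
          rcases hu with rfl | rfl
          · exact hb
          · exact hb.tail ⟨e, he, hfe⟩
        exact ih.tail ⟨e, hcl e he hbw, hfe⟩
  have hreach₁ : ∀ e ∈ E₁, ∀ u ∈ f e, Relation.ReflTransGen (Rrel f E₁) x u := by
    intro e he u hu
    apply restrict x E₁
    · intro e' he' hcl
      rw [mem_E₁]
      exact ⟨(Finset.mem_erase.mp he').1, hcl⟩
    · exact ((mem_E₁ e).mp he).2 u hu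
  set Edges₂ : Finset E := insert e₀ E₂ with hEdges₂
  have hstepxy : Rrel f Edges₂ x y := ⟨e₀, Finset.mem_insert_self _ _, hxy⟩
  have hreach₂ : ∀ e ∈ Edges₂, ∀ u ∈ f e, Relation.ReflTransGen (Rrel f Edges₂) x u := by
    intro e he u hu
    rcases Finset.mem_insert.mp he with rfl | he₂
    · rw [hxy, Sym2.mem_iff] at hu
      rcases hu with rfl | rfl
      · exact Relation.ReflTransGen.refl
      · exact Relation.ReflTransGen.refl.tail hstepxy
    · have h2 : Relation.ReflTransGen (Rrel f E₂) y u := by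
        apply restrict y E₂
        · intro e' he' hcl
          rw [mem_E₂]
          exact ⟨(Finset.mem_erase.mp he').1, hcl⟩
        · exact ((mem_E₂ e).mp he₂).2 u hu
      have h3 : Relation.ReflTransGen (Rrel f Edges₂) y u := by
        apply Relation.ReflTransGen.mono ?_ _ _ h2
        rintro a b ⟨e', he', hfe'⟩
        exact ⟨e', Finset.mem_insert_of_mem he', hfe'⟩
      exact (Relation.ReflTransGen.refl.tail hstepxy).trans h3
  -- apply Lemma A to both sides
  obtain ⟨c₁, δ₁, h1a, h1b, h1c⟩ := lemA f E₁ x e₀ hreach₁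
  obtain ⟨c₂, δ₂, h2a, _, _⟩ := lemA f Edges₂ x e₀ hreach₂
  set σ : Equiv.Perm (Fin 3) := Equiv.swap (c₂ e₀) δ₁ with hσ
  set c : E → Fin 3 := fun e => if e ∈ E₁ then c₁ e else σ (c₂ e) with hc
  refine ⟨c, ?_⟩
  intro i v
  -- general facts
  have he₀notE₁ : e₀ ∉ E₁ := fun h => ((mem_E₁ e₀).mp h).1 rfl
  have hce₀ : c e₀ = δ₁ := by
    rw [hc]
    simp only [if_neg he₀notE₁]
    rw [hσ]
    exact Equiv.swap_apply_left _ _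
  have hcE₁ : ∀ e ∈ E₁, c e = c₁ e := by
    intro e he; rw [hc]; simp only [if_pos he]
  have hxE₂ : ∀ e ∈ E₂, x ∉ f e := by
    intro e he hx
    exact hnotyx (((mem_E₂ e).mp he).2 x hx)
  have hyE₁ : ∀ e ∈ E₁, y ∉ f e := by
    intro e he hy
    exact hnotxy (((mem_E₁ e).mp he).2 y hy)
  have hE₁E₂ : ∀ e, e ∈ E₁ → e ∈ E₂ → False := by
    intro e h1 h2
    obtain ⟨⟨a, b⟩, hab0⟩ := (f e).exists_rep
    have ha : a ∈ f e := by rw [← hab0]; exact Sym2.mem_mk_left _ _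
    exact hdisj a (((mem_E₁ e).mp h1).2 a ha) (((mem_E₂ e).mp h2).2 a ha)
  have hncard : {e : E | v ∈ f e ∧ c e = i}.ncard
      = (Finset.univ.filter (fun e => v ∈ f e ∧ c e = i)).card := by
    rw [← Set.ncard_coe_finset]
    congr 1
    ext e
    simp
  rw [hncard]
  by_cases hvx : v = x
  · -- v = x : classes of side 1 plus the bridge
    subst hvx
    have hkey : Finset.univ.filter (fun e => v ∈ f e ∧ c e = i)
        = (E₁.filter (fun e => v ∈ f e ∧ c₁ e = i)) ∪ (if i = δ₁ then {e₀} else ∅) := by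
      ext e
      rw [Finset.mem_filter, Finset.mem_union, Finset.mem_filter]
      constructor
      · rintro ⟨-, hvf, hcei⟩
        by_cases he : e = e₀
        · subst he
          right
          rw [hce₀] at hcei
          rw [if_pos hcei.symm]
          exact Finset.mem_singleton_self e
        · rcases hsplit e he with h1 | h2
          · left
            rw [hcE₁ e h1] at hcei
            exact ⟨h1, hvf, hcei⟩
          · exact absurd hvf (hxE₂ e h2)
      · rintro (hmem | hmem)
        · exact ⟨Finset.mem_univ e, hmem.2.1, by rw [hcE₁ e hmem.1]; exact hmem.2.2⟩
        · by_cases hi : i = δ₁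
          · rw [if_pos hi, Finset.mem_singleton] at hmem
            subst hmem
            exact ⟨Finset.mem_univ _, by rw [hxy]; exact Sym2.mem_mk_left _ _, by rw [hce₀, hi]⟩
          · rw [if_neg hi] at hmem
            exact absurd hmem (Finset.notMem_empty e)
    rw [hkey, Finset.card_union_of_disjoint]
    · by_cases hi : i = δ₁
      · rw [if_pos hi, Finset.card_singleton]
        intro _
        subst hi
        exact Even.add_one h1c
      · rw [if_neg hi, Finset.card_empty, add_zero]
        exact h1b i hi
    · rw [Finset.disjoint_right]
      intro e he
      by_cases hi : i = δ₁
      · rw [if_pos hi, Finset.mem_singleton] at he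
        subst he
        rw [Finset.mem_filter]
        rintro ⟨hmem, -⟩
        exact he₀notE₁ hmem
      · rw [if_neg hi] at he
        exact absurd he (Finset.notMem_empty e)
  · by_cases hRx : RT x v
    · -- v strictly on side 1
      have hkey : Finset.univ.filter (fun e => v ∈ f e ∧ c e = i)
          = E₁.filter (fun e => v ∈ f e ∧ c₁ e = i) := by
        ext e
        rw [Finset.mem_filter, Finset.mem_filter]
        constructor
        · rintro ⟨-, hvf, hcei⟩
          by_cases he : e = e₀
          · subst he
            rw [hxy, Sym2.mem_iff] at hvf
            rcases hvf with rfl | rfl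
            · exact absurd rfl hvx
            · exact absurd hRx hnotxy
          · rcases hsplit e he with h1 | h2
            · rw [hcE₁ e h1] at hcei
              exact ⟨h1, hvf, hcei⟩
            · exact (hdisj v hRx (((mem_E₂ e).mp h2).2 v hvf)).elim
        · rintro ⟨hmem, hvf, hcei⟩
          exact ⟨Finset.mem_univ e, hvf, by rw [hcE₁ e hmem]; exact hcei⟩
      rw [hkey]
      exact h1a v hvx i
    · by_cases hRy : RT y v
      · -- v on side 2
        have hvz : v ≠ x := hvx
        have hkey : Finset.univ.filter (fun e => v ∈ f e ∧ c e = i)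
            = Edges₂.filter (fun e => v ∈ f e ∧ c₂ e = σ.symm i) := by
          ext e
          rw [Finset.mem_filter, Finset.mem_filter]
          constructor
          · rintro ⟨-, hvf, hcei⟩
            by_cases he : e = e₀
            · rw [he] at hvf hcei ⊢
              refine ⟨Finset.mem_insert_self _ _, hvf, ?_⟩
              have hh : c e₀ = σ (c₂ e₀) := by
                rw [hc]; simp only [if_neg he₀notE₁]
              rw [hh] at hcei
              rw [← hcei]
              simp
            · rcases hsplit e he with h1 | h2
              · exact absurd (((mem_E₁ e).mp h1).2 v hvf) hRx
              · refine ⟨Finset.mem_insert_of_mem h2, hvf, ?_⟩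
                have hne1 : e ∉ E₁ := fun hmem => hE₁E₂ e hmem h2
                have hh : c e = σ (c₂ e) := by rw [hc]; simp only [if_neg hne1]
                rw [hh] at hcei
                rw [← hcei]
                simp
          · rintro ⟨hmem, hvf, hcei⟩
            refine ⟨Finset.mem_univ e, hvf, ?_⟩
            rcases Finset.mem_insert.mp hmem with he | h2
            · rw [he] at hcei ⊢
              have hth : σ (c₂ e₀) = i := by rw [hcei]; exact σ.apply_symm_apply i
              rw [hce₀, ← hth, hσ, Equiv.swap_apply_left]
            · have hne1 : e ∉ E₁ := fun hmem1 => hE₁E₂ e hmem1 h2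
              rw [hc]
              simp only [if_neg hne1]
              rw [hcei]
              simp
        rw [hkey]
        exact h2a v hvz (σ.symm i)
      · -- v incident to nothing
        have hkey : Finset.univ.filter (fun e => v ∈ f e ∧ c e = i) = ∅ := by
          rw [Finset.filter_eq_empty_iff]
          rintro e - ⟨hvf, -⟩
          by_cases he : e = e₀
          · subst he
            rw [hxy, Sym2.mem_iff] at hvf
            rcases hvf with rfl | rfl
            · exact hRx Relation.ReflTransGen.refl
            · exact hRy Relation.ReflTransGen.refl
          · rcases hsplit e he with h1 | h2
            · exact hRx (((mem_E₁ e).mp h1).2 v hvf)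
            · exact hRy (((mem_E₂ e).mp h2).2 v hvf)
        rw [hkey, Finset.card_empty]
        intro h
        exact absurd rfl h


/-- A multigraph is given by an edge-index type `E` and an incidence map `f : E → Sym2 V`
(loopless when no `f e` is a diagonal).  `MOddEdgeColorable f k` means: there is an
edge-coloring with `k` colors such that every vertex incident to an edge of a color class
has odd degree in that class. -/
def MOddEdgeColorable {V E : Type*} (f : E → Sym2 V) (k : ℕ) : Prop :=
  ∃ c : E → Fin k, ∀ (i : Fin k) (v : V),
    {e : E | v ∈ f e ∧ c e = i}.ncard ≠ 0 → Odd {e : E | v ∈ f e ∧ c e = i}.ncard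

/-- A connected multigraph of odd order containing a bridge is odd 3-edge-colorable. -/
theorem stmt4 {V E : Type*} [Fintype V] [Fintype E] (f : E → Sym2 V)
    (hloopless : ∀ e, ¬ (f e).IsDiag)
    (hconn : (SimpleGraph.fromEdgeSet (Set.range f)).Connected)
    (hodd : Odd (Fintype.card V))
    (e₀ : E)
    (hbridge : ¬ (SimpleGraph.fromEdgeSet (f '' {e | e ≠ e₀})).Connected) :
    MOddEdgeColorable f 3 := by
  obtain ⟨c, hc⟩ := stmt4' f hloopless hconn e₀ hbridge
  exact ⟨c, hc⟩
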